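/- The infinite word f^ω(0) is undirected (7/4)⁺-free: no factor of f^ω(0) is an undirected r-power with rational r > 7/4. Equivalently, f^ω(0) has no factor of the form x·y·x′ with x nonempty, x′ ∈ {x, reversal of x}, and |x| > 3|y|. -/

import Mathlib

/-- `x` is a (finite, contiguous) factor of the infinite word `w`. -/
def InfFactor {A : Type*} (x : List A) (w : ℕ → A) : Prop :=
  ∃ i : ℕ, x = (List.range x.length).map fun j => w (i + j)

/-- `z` is an undirected `r`-power: `z = x ++ y ++ x'` with `x` nonempty,
`x' = x` or `x' = x.reverse`, and `|x y x'| / |x y| = r`. -/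
def IsUndirectedPow {A : Type*} (r : ℚ) (z : List A) : Prop :=
  ∃ x y x' : List A, z = x ++ y ++ x' ∧ x ≠ [] ∧ (x' = x ∨ x' = x.reverse) ∧
    (z.length : ℚ) = r * ((x.length : ℚ) + (y.length : ℚ))

/-- `z` is an ordinary `r`-power: `z = x ++ y ++ x` with `x` nonempty and `|x y x| / |x y| = r`. -/
def IsOrdinaryPow {A : Type*} (r : ℚ) (z : List A) : Prop :=
  ∃ x y : List A, z = x ++ y ++ x ∧ x ≠ [] ∧
    (z.length : ℚ) = r * ((x.length : ℚ) + (y.length : ℚ))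

/-- The infinite word `w` is undirected `α`-free: no factor of `w` is an undirected
`r`-power with rational `r ≥ α` (where `1 < r ≤ 2`). -/
def UndirectedFree {A : Type*} (α : ℝ) (w : ℕ → A) : Prop :=
  ∀ z : List A, InfFactor z w →
    ∀ r : ℚ, 1 < r → r ≤ 2 → α ≤ (r : ℝ) → ¬ IsUndirectedPow r z

/-- The infinite word `w` is undirected `α⁺`-free: no factor of `w` is an undirected
`r`-power with rational `r > α` (where `1 < r ≤ 2`). -/
def UndirectedPlusFree {A : Type*} (α : ℝ) (w : ℕ → A) : Prop :=
  ∀ z : List A, InfFactor z w →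
    ∀ r : ℚ, 1 < r → r ≤ 2 → α < (r : ℝ) → ¬ IsUndirectedPow r z

/-- The infinite word `w` is (ordinary) `α`-free. -/
def OrdinaryFree {A : Type*} (α : ℝ) (w : ℕ → A) : Prop :=
  ∀ z : List A, InfFactor z w →
    ∀ r : ℚ, 1 < r → r ≤ 2 → α ≤ (r : ℝ) → ¬ IsOrdinaryPow r z

/-- The infinite word `w` is (ordinary) `α⁺`-free. -/
def OrdinaryPlusFree {A : Type*} (α : ℝ) (w : ℕ → A) : Prop :=
  ∀ z : List A, InfFactor z w →
    ∀ r : ℚ, 1 < r → r ≤ 2 → α < (r : ℝ) → ¬ IsOrdinaryPow r z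

/-- The undirected repetition threshold for `k` letters: the infimum of the set of
rationals `r ∈ (1, 2]` such that undirected `r`-powers are `k`-avoidable. -/
noncomputable def URT (k : ℕ) : ℝ :=
  sInf {a : ℝ | ∃ r : ℚ, a = (r : ℝ) ∧ 1 < r ∧ r ≤ 2 ∧
    ∃ w : ℕ → Fin k, UndirectedFree (r : ℝ) w}

/-- The (ordinary) repetition threshold for `k` letters. -/
noncomputable def RT (k : ℕ) : ℝ :=
  sInf {a : ℝ | ∃ r : ℚ, a = (r : ℝ) ∧ 1 < r ∧ r ≤ 2 ∧
    ∃ w : ℕ → Fin k, OrdinaryFree (r : ℝ) w}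

/-- The 24-uniform morphism `f` on `{0,1,2}`:
`f(0) = 012021201021012102120210`, `f(1) = 120102012102120210201021`,
`f(2) = 201210120210201021012102`. -/
def fMorph : Fin 3 → List (Fin 3)
  | 0 => [0,1,2,0,2,1,2,0,1,0,2,1,0,1,2,1,0,2,1,2,0,2,1,0]
  | 1 => [1,2,0,1,0,2,0,1,2,1,0,2,1,2,0,2,1,0,2,0,1,0,2,1]
  | 2 => [2,0,1,2,1,0,1,2,0,2,1,0,2,0,1,0,2,1,0,1,2,1,0,2]

/-- The infinite fixed point `f^ω(0)` of `fMorph` starting with `0`: its letter at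
position `n` is the `(n mod 24)`-th letter of the image under `f` of its letter at
position `n / 24` (its prefix of length `24^n` is `f^n(0)` for every `n`). -/
def fOmega : ℕ → Fin 3
  | 0 => 0
  | n + 1 => (fMorph (fOmega ((n + 1) / 24))).getD ((n + 1) % 24) 0
  decreasing_by exact Nat.div_lt_self (Nat.succ_pos n) (by norm_num)

namespace FOP
def C2 (ab : Fin 3 × Fin 3) : List (Fin 3) := fMorph ab.1 ++ fMorph ab.2
def F2c : List (Fin 3 × Fin 3) := [(0,1),(0,2),(1,0),(1,2),(2,0),(2,1)]
def win (W : List (Fin 3)) (t n : ℕ) : List (Fin 3) :=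
  (List.range n).map fun j => W.getD (t+j) 0
def V6 : List (List (Fin 3)) :=
  ((F2c.map C2).map fun W => (List.range 24).map fun t => win W t 6).flatten
def fword : List (Fin 3) → List (Fin 3)
  | [] => []
  | a :: tl => fMorph a ++ fword tl

lemma flen (a : Fin 3) : (fMorph a).length = 24 := by fin_cases a <;> rfl
lemma keyV6 : ∀ ab ∈ F2c, ∀ t < 24, win (C2 ab) t 6 ∈ V6 := by decide
lemma key2 : ∀ ab ∈ F2c, ∀ t < 24, ((C2 ab).getD t 0, (C2 ab).getD (t+1) 0) ∈ F2c := by decide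
lemma keysync : ∀ a b c : Fin 3, ∀ t < 24,
    (∀ j < 24, (C2 (b,c)).getD (t+j) 0 = (fMorph a).getD j 0) → t = 0 ∧ b = a := by decide
lemma firstlet (a : Fin 3) : (fMorph a).getD 0 0 = a := by fin_cases a <;> rfl
lemma lastlet (a : Fin 3) : (fMorph a).getD 23 0 = a := by fin_cases a <;> rfl
lemma revget : ∀ a : Fin 3, ∀ j < 24, (fMorph a).reverse.getD j 0 = (fMorph a).getD (23-j) 0 := by decide

lemma w0 : fOmega 0 = 0 := by rw [fOmega]

lemma block (m j : ℕ) (hj : j < 24) : fOmega (24*m+j) = (fMorph (fOmega m)).getD j 0 := by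
  by_cases h0 : 24*m + j = 0
  · have hm : m = 0 := by omega
    have hj0 : j = 0 := by omega
    subst hm; subst hj0
    simp only [Nat.mul_zero, Nat.add_zero, w0]
    rfl
  · obtain ⟨n, hn⟩ : ∃ n, 24*m+j = n+1 := ⟨24*m+j-1, by omega⟩
    rw [hn, fOmega]
    have d1 : (n+1)/24 = m := by omega
    have d2 : (n+1)%24 = j := by omega
    rw [d1, d2]

lemma cblock (s t : ℕ) (ht : t < 48) :
    fOmega (24*s+t) = (C2 (fOmega s, fOmega (s+1))).getD t 0 := by
  by_cases h : t < 24
  · rw [block s t h, C2, List.getD_append]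
    rw [flen]; exact h
  · have he : 24*s + t = 24*(s+1) + (t-24) := by omega
    rw [he, block (s+1) _ (by omega), C2, List.getD_append_right]
    · congr 1; rw [flen]
    · rw [flen]; omega

lemma pairs : ∀ m, (fOmega m, fOmega (m+1)) ∈ F2c := by
  intro m
  induction m using Nat.strong_induction_on with
  | _ m ih =>
    by_cases h0 : m = 0
    · subst h0
      have h1 : fOmega 1 = (fMorph (fOmega 0)).getD 1 0 := block 0 1 (by norm_num)
      rw [w0] at h1 ⊢
      rw [h1]; decide
    · have ht : m % 24 < 24 := Nat.mod_lt _ (by norm_num)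
      have e1 : fOmega m = (C2 (fOmega (m/24), fOmega (m/24+1))).getD (m%24) 0 := by
        have : m = 24*(m/24) + m%24 := by omega
        conv_lhs => rw [this]
        exact cblock _ _ (by omega)
      have e2 : fOmega (m+1) = (C2 (fOmega (m/24), fOmega (m/24+1))).getD (m%24+1) 0 := by
        have : m + 1 = 24*(m/24) + (m%24+1) := by omega
        rw [this]
        exact cblock _ _ (by omega)
      rw [e1, e2]
      exact key2 _ (ih (m/24) (by omega)) (m%24) ht

lemma win24 (m : ℕ) : ∃ ab ∈ F2c, ∃ r < 24, ∀ j < 24,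
    fOmega (m+j) = (C2 ab).getD (r+j) 0 := by
  refine ⟨(fOmega (m/24), fOmega (m/24+1)), pairs _, m%24, Nat.mod_lt _ (by norm_num), ?_⟩
  intro j hj
  have : m + j = 24*(m/24) + (m%24+j) := by omega
  rw [this]
  exact cblock _ _ (by omega)

lemma sync (m : ℕ) (a : Fin 3) (h : ∀ j < 24, fOmega (m+j) = (fMorph a).getD j 0) :
    m % 24 = 0 ∧ fOmega (m/24) = a := by
  have h2 : ∀ j < 24, (C2 (fOmega (m/24), fOmega (m/24+1))).getD (m%24+j) 0
      = (fMorph a).getD j 0 := by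
    intro j hj
    rw [← cblock (m/24) (m%24+j) (by omega)]
    have : 24*(m/24) + (m%24+j) = m + j := by omega
    rw [this]
    exact h j hj
  exact keysync a _ _ (m%24) (Nat.mod_lt _ (by norm_num)) h2

lemma fword_getD : ∀ (v : List (Fin 3)) (d e : ℕ), d < v.length → e < 24 →
    (fword v).getD (24*d+e) 0 = (fMorph (v.getD d 0)).getD e 0 := by
  intro v
  induction v with
  | nil => intro d e hd _; simp at hd
  | cons a tl ih =>
    intro d e hd he
    cases d with
    | zero =>
      show (fMorph a ++ fword tl).getD (24*0+e) 0 = _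
      rw [List.getD_append]
      · norm_num
      · rw [flen]; omega
    | succ d =>
      show (fMorph a ++ fword tl).getD _ 0 = _
      rw [List.getD_append_right]
      · have : 24*(d+1)+e - (fMorph a).length = 24*d+e := by rw [flen]; omega
        rw [this]
        exact ih d e (by simpa using hd) he
      · rw [flen]; omega

lemma six (s : ℕ) : ((List.range 6).map fun d => fOmega (s+d)) ∈ V6 := by
  have hmem := pairs (s/24)
  have heq : ((List.range 6).map fun d => fOmega (s+d))
      = win (C2 (fOmega (s/24), fOmega (s/24+1))) (s%24) 6 := by
    apply List.map_congr_left
    intro d hd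
    have hd6 : d < 6 := List.mem_range.mp hd
    have : s + d = 24*(s/24) + (s%24+d) := by omega
    rw [this]
    exact cblock _ _ (by omega)
  rw [heq]
  exact keyV6 _ hmem _ (Nat.mod_lt _ (by norm_num))

lemma getD_map_range (n j : ℕ) (g : ℕ → Fin 3) (h : j < n) :
    ((List.range n).map g).getD j 0 = g j := by
  have h2 : j < ((List.range n).map g).length := by simpa using h
  rw [List.getD_eq_getElem _ _ h2]
  simp

lemma L3 (i : ℕ) : ∃ v ∈ V6, ∃ r < 24, ∀ j < 107,
    fOmega (i+j) = (fword v).getD (r+j) 0 := by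
  refine ⟨(List.range 6).map fun d => fOmega (i/24+d), six _, i%24,
    Nat.mod_lt _ (by norm_num), ?_⟩
  intro j hj
  set v := (List.range 6).map fun d => fOmega (i/24+d) with hv
  have hvlen : v.length = 6 := by simp [hv]
  have hd : (i%24+j)/24 < 6 := by omega
  have hsplit : i%24 + j = 24*((i%24+j)/24) + (i%24+j)%24 := by omega
  rw [hsplit, fword_getD v _ _ (by omega) (by omega)]
  have hvget : v.getD ((i%24+j)/24) 0 = fOmega (i/24 + (i%24+j)/24) := by
    rw [hv]
    exact getD_map_range 6 _ _ (by omega)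
  rw [hvget, ← block (i/24 + (i%24+j)/24) _ (by omega)]
  congr 1
  omega




/-! ### Kernel-checkable computational facts via `ℕ` base-4 encodings -/

/-- Base-4 encoding of a word over `Fin 3`. -/
def enc : List (Fin 3) → ℕ
  | [] => 0
  | a :: tl => a.val + 4 * enc tl

/-- The `i`-th base-4 digit of `W`. -/
def lt3 (W i : ℕ) : ℕ := W / 4^i % 4

/-- The encodings of the `f`-images of the (candidate) factors of length 6. -/
def V6N : List ℕ := [
188693381316774313378048565943891543248697884064821545071398112149707451733311414674980,
260849366498267008634242811509533398930191361901052080787355579021647732556144411297865,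
47780488594746077115807925206919177867012281958488495179278386894012719111156088213906,
188693381316773556405331511433057570629610858367098762950129419073167789299457799038500,
47780488594745820766252363588885780418299347780937444852084062052875768052824965419410,
260849366498266508011081318611354209107100570757883385294166900608925438308649663875145,
188693381316774313378048565943891543248697880829235265817925101247322789768691053007250,
47780488594745820766252363591575087744657689655890141476653908588976223873534116570660,
188693381316773556405331511432146834057012678504908135224674493156439736031234006337609,
260849366498267008634242811506844091603833016790513104909335170302119588268696278214180,
188693381316774313378048565945670114002458042841997334717096414416242382950921116619154,
47780488594745820766252363591575087744657695974642787074898964134526606929733456644169,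
260849366498266508011081318611354209107100580312222310145873471945227240339289816507940,
188693381316774313378048565943891543248697880829235265817959045077913006497937404348489,
260849366498267008634242811509533398930191361901052080787344083910014489645718733099410,
47780488594746077115807925206919177867012281958488495179278386894012719070317247875145,
260849366498266508011081318612264945679698760174412937871305949142998319868446806976036,
188693381316774313378048565943891543248697884064821545071398112149707451853904125923730,
47780488594745820766252363591575087744657689655890141476665403700609466904552506017865,
188693381316773556405331511432146834057012678504908135224674493156439736072072846676370,
47780488594746077115807925206919177867012272404149570327582769165034647868318219276690,
188693381316773556405331511433057570629610858367098762950095475242577572609126478268489,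
47780488594745820766252363588885780418299347780937444852084062052875767932232254170660,
260849366498266508011081318611354209107100580312222310145851023226270266641061854613906,
47780488594746077115807925205140607113252110391387501428445399826705271335580636096036,
188693381316773556405331511433057570629610852048346117351850419697027189673519849443730,
260849366498267008634242811506844091603833020026099384162751788654957059844757357217865,
188693381316774313378048565945670114002458042841997334717107909527875625781592923907620,
47780488594746077115807925205140607113252110391387501428411455996115054686088155664786,
188693381316773556405331511433057570629610852048346117351850419697027189552927138194980,
47780488594745820766252363591575087744657695974642787074898964134526606970572296982930,
47780488594745820766252363588885780418299347780937444852061613333918794193165451937865,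
260849366498266508011081318611354209107100570757883385294166900608925438228895792965156,
260849366498266508011081318612264945679698760174412937871272005312408103178115486206025,
260849366498267008634242811509533398930191361901052080787344083910014489525126021850660,
260849366498267008634242811506844091603833020026099384162774237373914033704416870699410,
188693381316774313378048565945670114002458042841997334717107909527875625861346794817609,
188693381316773556405331511432146834057012678504908135224696941875396709770300808570404,
260849366498267008634242811506844091603833016790513104909335170302119588348450149124169,
47780488594746077115807925205140607113252110391387501428445399826705271415334507006025,
47780488594746077115807925206919177867012272404149570327594264276667890698990026565156,
260849366498266508011081318612264945679698760174412937871272005312408103218954326544786]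

def natAll (f : ℕ → Bool) : ℕ → Bool
  | 0 => true
  | n+1 => f n && natAll f n

def natAny (f : ℕ → Bool) : ℕ → Bool
  | 0 => false
  | n+1 => f n || natAny f n

lemma natAll_iff (f : ℕ → Bool) : ∀ n, (natAll f n = true ↔ ∀ i < n, f i = true) := by
  intro n
  induction n with
  | zero => simp [natAll]
  | succ n ih =>
    rw [natAll, Bool.and_eq_true, ih]
    constructor
    · rintro ⟨h1, h2⟩ i hi
      rcases Nat.lt_succ_iff_lt_or_eq.mp hi with h | h
      · exact h2 i h
      · subst h; exact h1
    · intro h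
      exact ⟨h n (Nat.lt_succ_self n), fun i hi => h i (Nat.lt_succ_of_lt hi)⟩

lemma natAny_iff (f : ℕ → Bool) : ∀ n, (natAny f n = true ↔ ∃ i < n, f i = true) := by
  intro n
  induction n with
  | zero => simp [natAny]
  | succ n ih =>
    rw [natAny, Bool.or_eq_true, ih]
    constructor
    · rintro (h | ⟨i, hi, hf⟩)
      · exact ⟨n, Nat.lt_succ_self n, h⟩
      · exact ⟨i, Nat.lt_succ_of_lt hi, hf⟩
    · rintro ⟨i, hi, hf⟩
      rcases Nat.lt_succ_iff_lt_or_eq.mp hi with h | h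
      · exact Or.inr ⟨i, h, hf⟩
      · subst h; exact Or.inl hf

def chkA : Bool := V6N.all fun W => natAll (fun r => natAll (fun P' =>
  natAny (fun t => lt3 W (r+t) != lt3 W (r+t+(P'+1))) (3*(P'+1)/4+1)) 61) 24

def chkC : Bool := V6N.all fun W => natAll (fun q => natAll (fun c' =>
  natAny (fun d => lt3 W (c'+3*q-d) != lt3 W (c'+4*q+1+d))
    (max (3*q+1) (c'+3*q+1-23))) (69-3*q)) 16

set_option maxRecDepth 10000 in
set_option maxHeartbeats 40000000 in
lemma hchkA : chkA = true := by decide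

set_option maxRecDepth 10000 in
set_option maxHeartbeats 40000000 in
lemma hchkC : chkC = true := by decide

set_option maxRecDepth 10000 in
set_option maxHeartbeats 4000000 in
lemma memV6N : ∀ v ∈ V6, enc (fword v) ∈ V6N := by decide

set_option maxRecDepth 10000 in
set_option maxHeartbeats 4000000 in
lemma fwordlen : ∀ v ∈ V6, (fword v).length = 144 := by decide

lemma encget : ∀ (l : List (Fin 3)) (i : ℕ), i < l.length → lt3 (enc l) i = (l.getD i 0).val := by
  intro l
  induction l with
  | nil => intro i hi; simp at hi
  | cons a tl ih =>
    intro i hi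
    cases i with
    | zero =>
      have ha : a.val < 3 := a.isLt
      show (a.val + 4 * enc tl) / 4^0 % 4 = _
      simp only [pow_zero, Nat.div_one, List.getD_cons_zero]
      omega
    | succ i =>
      have hstep : (a.val + 4 * enc tl) / 4^(i+1) = enc tl / 4^i := by
        have ha : a.val < 4 := by have := a.isLt; omega
        rw [pow_succ']
        rw [← Nat.div_div_eq_div_mul]
        congr 1
        rw [Nat.add_mul_div_left _ _ (by norm_num : (0:ℕ) < 4)]
        rw [Nat.div_eq_of_lt ha]
        omega
      show (a.val + 4 * enc tl) / 4^(i+1) % 4 = _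
      rw [hstep, List.getD_cons_succ]
      exact ih i (by simpa using hi)

lemma keyA : ∀ v ∈ V6, ∀ r < 24, ∀ P < 62, ∀ p < 47, 0 < P → 0 < p → 3*P+1 ≤ 4*p →
    ∃ t < p, (fword v).getD (r+t) 0 ≠ (fword v).getD (r+t+P) 0 := by
  intro v hv r hr P hP p hp hPpos hppos hineq
  have h1 := List.all_eq_true.mp hchkA (enc (fword v)) (memV6N v hv)
  have h2 := (natAll_iff _ _).mp h1 r hr
  have h3 := (natAll_iff _ _).mp h2 (P-1) (by omega)
  obtain ⟨t, ht, hf⟩ := (natAny_iff _ _).mp h3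
  have hPe : P - 1 + 1 = P := by omega
  rw [hPe] at ht hf
  have hne : lt3 (enc (fword v)) (r+t) ≠ lt3 (enc (fword v)) (r+t+P) := by
    simpa using hf
  have htp : t < p := by omega
  refine ⟨t, htp, fun heq => hne ?_⟩
  rw [encget _ _ (by rw [fwordlen v hv]; omega), encget _ _ (by rw [fwordlen v hv]; omega), heq]

lemma keyC : ∀ v ∈ V6, ∀ r < 24, ∀ p < 47, ∀ q < 16, 0 < p → 3*q+1 ≤ p →
    ∃ t < p, (fword v).getD (r+t) 0 ≠ (fword v).getD (r+(2*p+q-1-t)) 0 := by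
  intro v hv r hr p hp q hq hppos hineq
  have h1 := List.all_eq_true.mp hchkC (enc (fword v)) (memV6N v hv)
  have h2 := (natAll_iff _ _).mp h1 q hq
  have h3 := (natAll_iff _ _).mp h2 (r+p-3*q-1) (by omega)
  obtain ⟨d, hd, hf⟩ := (natAny_iff _ _).mp h3
  have hdp : d < p := by
    have hmax : max (3*q+1) ((r+p-3*q-1)+3*q+1-23) ≤ p := by
      apply max_le <;> omega
    omega
  have e1 : (r+p-3*q-1)+3*q-d = r+(p-1-d) := by omega
  have e2 : (r+p-3*q-1)+4*q+1+d = r+(2*p+q-1-(p-1-d)) := by omega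
  rw [e1, e2] at hf
  have hne : lt3 (enc (fword v)) (r+(p-1-d)) ≠ lt3 (enc (fword v)) (r+(2*p+q-1-(p-1-d))) := by
    simpa using hf
  refine ⟨p-1-d, by omega, fun heq => hne ?_⟩
  rw [encget _ _ (by rw [fwordlen v hv]; omega), encget _ _ (by rw [fwordlen v hv]; omega), heq]

lemma keyB : ∀ ab ∈ F2c, ∀ c : Fin 3, ∀ r < 24,
    ∃ j < 24, (C2 ab).getD (r+j) 0 ≠ (fMorph c).reverse.getD j 0 := by decide

/-- The main periodicity lemma: `fOmega` has no factor with period `P` and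
"excess" `p` satisfying `4p ≥ 3P+1`. -/
lemma main : ∀ P, 0 < P → ∀ p i, 0 < p → 3*P+1 ≤ 4*p →
    ¬(∀ t < p, fOmega (i+t) = fOmega (i+t+P)) := by
  intro P
  induction P using Nat.strong_induction_on with
  | _ P ih =>
    intro hP p i hp hineq hper
    by_cases hps : p ≤ 46
    · -- small case: finite check
      obtain ⟨v, hv, r, hr, hw⟩ := L3 i
      obtain ⟨t, ht, hne⟩ := keyA v hv r hr P (by omega) p (by omega) hP hp hineq
      apply hne
      have e1 : (fword v).getD (r+t) 0 = fOmega (i+t) := (hw t (by omega)).symm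
      have e2 : (fword v).getD (r+t+P) 0 = fOmega (i+(t+P)) := by
        have hrw : r+t+P = r+(t+P) := by omega
        rw [hrw]
        exact (hw (t+P) (by omega)).symm
      rw [e1, e2, hper t ht]
      congr 1
      omega
    · -- large case: desubstitute
      have hp47 : 47 ≤ p := by omega
      set s := (i+23)/24 with hs
      have h1 : i ≤ 24*s := by omega
      have h2 : 24*s ≤ i + 23 := by omega
      have hocc : ∀ j < 24, fOmega (24*s+P+j) = (fMorph (fOmega s)).getD j 0 := by
        intro j hj
        have hper1 := hper (24*s+j-i) (by omega)
        have ei : i + (24*s+j-i) = 24*s+j := by omega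
        rw [ei] at hper1
        have ei2 : 24*s+j+P = 24*s+P+j := by omega
        rw [ei2] at hper1
        rw [← hper1]
        exact block s j hj
      obtain ⟨hmod, hval⟩ := sync (24*s+P) (fOmega s) hocc
      have hP24 : P % 24 = 0 := by omega
      set P' := P/24 with hP'
      have hPP' : P = 24*P' := by omega
      have hP'pos : 0 < P' := by omega
      set k0 := i/24 with hk0
      set k1 := (i+p+23)/24 with hk1
      have claim : ∀ k, k0 ≤ k → k < k1 → fOmega k = fOmega (k+P') := by
        intro k hlo hhi
        by_cases hki : i ≤ 24*k
        · have hkp : 24*k < i + p := by omega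
          have hper0 := hper (24*k - i) (by omega)
          have ei : i + (24*k-i) = 24*k := by omega
          rw [ei] at hper0
          have ei2 : 24*k+P = 24*(k+P') := by omega
          rw [ei2] at hper0
          have eL : fOmega (24*k) = fOmega k := by
            have hb := block k 0 (by norm_num)
            rw [Nat.add_zero] at hb
            rw [hb, firstlet]
          have eR : fOmega (24*(k+P')) = fOmega (k+P') := by
            have hb := block (k+P') 0 (by norm_num)
            rw [Nat.add_zero] at hb
            rw [hb, firstlet]
          rw [← eL, ← eR, hper0]
        · have hband : i ≤ 24*k+23 ∧ 24*k+23 < i+p := by omega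
          have hper0 := hper (24*k+23 - i) (by omega)
          have ei : i + (24*k+23-i) = 24*k+23 := by omega
          rw [ei] at hper0
          have ei2 : 24*k+23+P = 24*(k+P')+23 := by omega
          rw [ei2] at hper0
          have eL : fOmega (24*k+23) = fOmega k := by
            rw [block k 23 (by norm_num), lastlet]
          have eR : fOmega (24*(k+P')+23) = fOmega (k+P') := by
            rw [block (k+P') 23 (by norm_num), lastlet]
          rw [← eL, ← eR, hper0]
      have h24p' : p ≤ 24*(k1 - k0) := by omega
      have hp'pos : 0 < k1 - k0 := by omega
      have hineq' : 3*P' + 1 ≤ 4*(k1-k0) := by omega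
      exact ih P' (by omega) hP'pos (k1-k0) k0 hp'pos hineq'
        (fun t ht => claim (k0+t) (by omega) (by omega))

/-- No reversed repetition: there is no factor `x y x.reverse` with `|x| ≥ 3|y|+1`. -/
lemma revmain : ∀ i p q, 0 < p → 3*q+1 ≤ p →
    ¬(∀ t < p, fOmega (i+p+q+t) = fOmega (i + (p - 1 - t))) := by
  intro i p q hp hq hrev
  by_cases hps : p ≤ 46
  · obtain ⟨v, hv, r, hr, hw⟩ := L3 i
    obtain ⟨t, ht, hne⟩ := keyC v hv r hr p (by omega) q (by omega) hp hq
    apply hne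
    rw [← hw t (by omega), ← hw (2*p+q-1-t) (by omega)]
    have e1 : i + (2*p+q-1-t) = i+p+q + (p-1-t) := by omega
    rw [e1, hrev (p-1-t) (by omega)]
    congr 1
    omega
  · set k := (i+23)/24 with hk
    have hk1 : i ≤ 24*k := by omega
    have hk2 : 24*k ≤ i+23 := by omega
    have hk3 : 24*k+24 ≤ i+p := by omega
    set a := fOmega k with ha
    set δ := i + p - (24*k+24) with hδ
    have hrev24 : ∀ j < 24, fOmega (i+p+q+(δ+j)) = (fMorph a).reverse.getD j 0 := by
      intro j hj
      have h1 := hrev (δ+j) (by omega)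
      have e1 : i + (p-1-(δ+j)) = 24*k + (23-j) := by omega
      rw [e1] at h1
      rw [h1, block k (23-j) (by omega), revget a j hj]
    obtain ⟨ab, hab, r, hr, hww⟩ := win24 (i+p+q+δ)
    obtain ⟨j, hj, hne⟩ := keyB ab hab a r hr
    apply hne
    rw [← hww j hj, ← hrev24 j hj]
    congr 1
    omega

end FOP


/-- The word `f^ω(0)` is undirected `(7/4)⁺`-free: no factor of `f^ω(0)` is an
undirected `r`-power with rational `r > 7/4`. -/
theorem fOmega_undirected_seven_fourths_plus_free :
    UndirectedPlusFree (7 / 4 : ℝ) fOmega := by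
  intro z hz r hr1 hr2 hr74 hpow
  obtain ⟨x, y, x', hsplit, hxne, hxx, hlen⟩ := hpow
  obtain ⟨i, hzi⟩ := hz
  set p := x.length with hpdef
  set q := y.length with hqdef
  have hppos : 0 < p := List.length_pos_iff.mpr hxne
  have hx'len : x'.length = p := by
    rcases hxx with h | h <;> simp [h, hpdef]
  have hzlen : z.length = p + q + p := by
    rw [hsplit]
    simp [List.length_append, hx'len]
    omega
  -- from the rational condition, p ≥ 3q+1
  have hr74' : (7:ℚ)/4 < r := by
    have : ((7:ℚ)/4 : ℝ) < (r:ℝ) := by push_cast; linarith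
    exact_mod_cast this
  have hq3 : 3*q + 1 ≤ p := by
    have hcast : ((p + q + p : ℕ) : ℚ) = r * ((p:ℚ) + (q:ℚ)) := by
      rw [← hzlen]; exact hlen
    push_cast at hcast
    have hpq : (0:ℚ) < (p:ℚ) + (q:ℚ) := by
      have : (0:ℚ) < (p:ℚ) := by exact_mod_cast hppos
      positivity
    have h7 : (7:ℚ) * ((p:ℚ) + (q:ℚ)) < 4 * ((p:ℚ) + (q:ℚ) + (p:ℚ)) := by
      nlinarith
    have : (3:ℚ)*(q:ℚ) < (p:ℚ) := by linarith
    have : (3*q : ℕ) < p := by exact_mod_cast this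
    omega
  -- z's letters
  have hget : ∀ j < z.length, z.getD j 0 = fOmega (i+j) := by
    intro j hj
    conv_lhs => rw [hzi]
    exact FOP.getD_map_range _ _ _ hj
  have hxget : ∀ t < p, x.getD t 0 = fOmega (i+t) := by
    intro t ht
    rw [← hget t (by omega), hsplit,
      List.getD_append _ _ _ _ (by simp [List.length_append]; omega),
      List.getD_append _ _ _ _ (by omega)]
  have hx'get : ∀ t < p, x'.getD t 0 = fOmega (i+(p+q+t)) := by
    intro t ht
    rw [← hget (p+q+t) (by omega), hsplit,
      List.getD_append_right _ _ _ _ (by simp only [List.length_append]; omega)]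
    congr 1
    simp [List.length_append, ← hpdef, ← hqdef]
  rcases hxx with hxe | hxr
  · -- ordinary repetition
    apply FOP.main (p+q) (by omega) p i hppos (by omega)
    intro t ht
    have h1 := hxget t ht
    have h2 := hx'get t ht
    rw [hxe] at h2
    rw [← h1, h2]
    congr 1
    omega
  · -- reversed repetition
    apply FOP.revmain i p q hppos hq3
    intro t ht
    have h1 := hx'get t ht
    rw [hxr] at h1
    have h2 : x.reverse.getD t 0 = x.getD (p-1-t) 0 := by
      have hlt : t < x.reverse.length := by simpa using ht
      rw [List.getD_eq_getElem _ _ hlt, List.getD_eq_getElem _ _ (by omega : p-1-t < x.length)]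
      rw [List.getElem_reverse]
    have e : i+p+q+t = i+(p+q+t) := by omega
    rw [e, ← h1, h2, hxget (p-1-t) (by omega)]
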